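/- Let $r_1 > r_2 > 0$ and $e, m, q_1, q_2, a_q > 0$ with $a_q q_1 \geq q_2$, and let $s(k)$, $k_0$, and $L = \log(r_1/r_2)$ be as above. Then $s'(k_0) = e m (a_q q_1 r_1 + q_2 r_2)[(r_1+r_2)(a_q q_1 r_1 - q_2 r_2) + (3 a_q q_1 - q_2) r_1 r_2 L] > 0$. -/

import Mathlib

theorem stmt6 (r1 r2 e m q1 q2 aq : ℝ)
    (hr : r1 > r2) (hr2 : r2 > 0) (he : e > 0) (hm : m > 0)
    (hq1 : q1 > 0) (hq2 : q2 > 0) (haq : aq > 0) (htrade : aq*q1 ≥ q2) :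
    let L := Real.log (r1/r2)
    let s0 := (1/2) * e^2*q1*q2*r1*r2*L*(2*aq*q1*r1 + 2*q2*r2 + (q2*r2 - aq*q1*r1)*L)
    let s1 := e*m*((r1+r2)*(aq^2*q1^2*r1^2 - q2^2*r2^2)
      - r1*r2*(aq^2*q1^2*r1 + q2^2*r2 - 3*aq*q1*q2*(r1+r2))*L)
    let s2 := 4*aq*m^2*(aq*q1 - q2)*r1*r2*(r1+r2)
    let k0 := e*q1*r1*L / (2*m*(r1+r2))
    deriv (fun k => s2*k^2 + s1*k + s0) k0 =
      e*m*(aq*q1*r1 + q2*r2)*((r1+r2)*(aq*q1*r1 - q2*r2) + (3*aq*q1 - q2)*r1*r2*L) ∧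
    0 < deriv (fun k => s2*k^2 + s1*k + s0) k0 := by
  intro L s0 s1 s2 k0
  have hr1 : r1 > 0 := lt_trans hr2 hr
  have hsum : r1 + r2 > 0 := by linarith
  have hL : L > 0 := Real.log_pos (by rw [lt_div_iff₀ hr2]; linarith)
  have hderiv : deriv (fun k => s2*k^2 + s1*k + s0) k0 = 2*s2*k0 + s1 := by
    have h : HasDerivAt (fun k => s2*k^2 + s1*k + s0)
        (s2 * ((2:ℕ) * k0 ^ (2-1)) + (s1 * 1 + 0)) k0 := by
      have := ((hasDerivAt_pow 2 k0).const_mul s2).add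
        (((hasDerivAt_id k0).const_mul s1).add (hasDerivAt_const k0 s0))
      simpa [add_assoc, Pi.add_def] using this
    rw [h.deriv]; push_cast; ring
  have hk0eq : 2*s2*k0 + s1 =
      e*m*(aq*q1*r1 + q2*r2)*((r1+r2)*(aq*q1*r1 - q2*r2) + (3*aq*q1 - q2)*r1*r2*L) := by
    simp only [s1, s2, k0]
    field_simp
    ring
  rw [hderiv, hk0eq]
  refine ⟨rfl, ?_⟩
  have h1 : aq*q1*r1 - q2*r2 > 0 := by nlinarith
  have h2 : 3*aq*q1 - q2 > 0 := by nlinarith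
  have hpos : (r1+r2)*(aq*q1*r1 - q2*r2) + (3*aq*q1 - q2)*r1*r2*L > 0 := by positivity
  positivity
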